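/- Let all parameters s, L, a, r, K, b, λ, β, ψ, φ, μ, ν, e, f be positive reals. The characteristic polynomial of the Jacobian matrix J evaluated at the equilibrium E₂ = (0, K, 0, 0) equals (X + r)(X - (s - aK))(X - (λK - ψ - μ))(X - (βK - φ - ν)); consequently all four eigenvalues of J at E₂ are negative if and only if K > s/a, K < (ψ+μ)/λ and K < (φ+ν)/β. -/

import Mathlib

open Polynomial

/-- The Jacobian matrix of the two-strain ecoepidemic competition model at `(P, S, V, W)`. -/
noncomputable def ecoJac (s L a r K b lam beta psi phi mu nu e f P S V W : ℝ) :
    Matrix (Fin 4) (Fin 4) ℝ :=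
  !![s - 2*s*P/L - a*S, -(a*P), 0, 0;
     -(b*S), r - 2*r*S/K - lam*V - beta*W - b*P, -(lam*S) + psi, -(beta*S) + phi;
     -(e*V), lam*V, lam*S - mu - psi - e*P, 0;
     -(f*W), beta*W, 0, beta*S - nu - phi - f*P]

/-- At the equilibrium `E₂ = (0,K,0,0)` the characteristic polynomial of the Jacobian is
`(X + r)(X - (s - aK))(X - (λK - ψ - μ))(X - (βK - φ - ν))`; consequently all four
eigenvalues are negative iff `K > s/a`, `K < (ψ+μ)/λ` and `K < (φ+ν)/β`. -/
theorem E2_charpoly_and_stability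
    (s L a r K b lam beta psi phi mu nu e f : ℝ)
    (hs : 0 < s) (hL : 0 < L) (ha : 0 < a) (hr : 0 < r) (hK : 0 < K) (hb : 0 < b)
    (hlam : 0 < lam) (hbeta : 0 < beta) (hpsi : 0 < psi) (hphi : 0 < phi)
    (hmu : 0 < mu) (hnu : 0 < nu) (he : 0 < e) (hf : 0 < f) :
    (ecoJac s L a r K b lam beta psi phi mu nu e f 0 K 0 0).charpoly
        = (X + C r) * (X - C (s - a * K)) * (X - C (lam * K - psi - mu))
            * (X - C (beta * K - phi - nu)) ∧
    ((∀ x : ℝ,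
        (ecoJac s L a r K b lam beta psi phi mu nu e f 0 K 0 0).charpoly.IsRoot x →
          x < 0) ↔
      (K > s / a ∧ K < (psi + mu) / lam ∧ K < (phi + nu) / beta)) := by
  have hM : ecoJac s L a r K b lam beta psi phi mu nu e f 0 K 0 0 =
      !![s - a*K, 0, 0, 0;
         -(b*K), -r, -(lam*K) + psi, -(beta*K) + phi;
         0, 0, lam*K - mu - psi, 0;
         0, 0, 0, beta*K - nu - phi] := by
    ext i j
    fin_cases i <;> fin_cases j <;>
      simp [ecoJac] <;> field_simp <;> ring
  have h1 : (ecoJac s L a r K b lam beta psi phi mu nu e f 0 K 0 0).charpoly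
        = (X + C r) * (X - C (s - a * K)) * (X - C (lam * K - psi - mu))
            * (X - C (beta * K - phi - nu)) := by
    rw [hM, Matrix.charpoly]
    simp [Matrix.det_succ_row_zero, Fin.sum_univ_succ, Matrix.charmatrix_apply,
      Matrix.diagonal_apply, map_sub, map_add,
      map_mul, map_neg]
    ring
  refine ⟨h1, ?_⟩
  have hroot : ∀ x : ℝ,
      (ecoJac s L a r K b lam beta psi phi mu nu e f 0 K 0 0).charpoly.IsRoot x ↔
        (x = -r ∨ x = s - a*K ∨ x = lam*K - psi - mu ∨ x = beta*K - nu - phi) := by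
    intro x
    rw [h1]
    simp only [IsRoot, eval_mul, eval_add, eval_sub, eval_X, eval_C, mul_eq_zero]
    constructor
    · rintro (((h | h) | h) | h)
      · exact Or.inl (by linarith)
      · exact Or.inr (Or.inl (by linarith))
      · exact Or.inr (Or.inr (Or.inl (by linarith)))
      · exact Or.inr (Or.inr (Or.inr (by linarith)))
    · rintro (h | h | h | h) <;> subst h
      · exact Or.inl (Or.inl (Or.inl (by ring)))
      · exact Or.inl (Or.inl (Or.inr (by ring)))
      · exact Or.inl (Or.inr (by ring))
      · exact Or.inr (by ring)
  constructor
  · intro hall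
    refine ⟨?_, ?_, ?_⟩
    · have := hall (s - a*K) ((hroot _).2 (Or.inr (Or.inl rfl)))
      rw [gt_iff_lt, div_lt_iff₀ ha]; linarith
    · have := hall (lam*K - psi - mu) ((hroot _).2 (Or.inr (Or.inr (Or.inl rfl))))
      rw [lt_div_iff₀ hlam]; linarith
    · have := hall (beta*K - nu - phi) ((hroot _).2 (Or.inr (Or.inr (Or.inr rfl))))
      rw [lt_div_iff₀ hbeta]; linarith
  · rintro ⟨h2, h3, h4⟩ x hx
    rw [gt_iff_lt, div_lt_iff₀ ha] at h2
    rw [lt_div_iff₀ hlam] at h3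
    rw [lt_div_iff₀ hbeta] at h4
    rcases (hroot x).1 hx with h | h | h | h <;> subst h <;> linarith
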